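/- If λ ∈ ℝ^n satisfies Σ_{j<k} λ_j λ_k ≥ 0 and Σ_j λ_j ≥ 0, then for every index j one has Σ_{k ≠ j} λ_k ≥ 0. -/
import Mathlib

open Finset

theorem stmt_2 (n : ℕ) (l : Fin n → ℝ)
    (hσ : 0 ≤ ∑ p ∈ Finset.univ.filter (fun p : Fin n × Fin n => p.1 < p.2), l p.1 * l p.2)
    (htr : 0 ≤ ∑ j, l j) :
    ∀ j : Fin n, 0 ≤ ∑ k ∈ Finset.univ.erase j, l k := by
  intro j
  set σ := ∑ p ∈ Finset.univ.filter (fun p : Fin n × Fin n => p.1 < p.2), l p.1 * l p.2 with hσdef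
  have hswap : ∑ p ∈ Finset.univ.filter (fun p : Fin n × Fin n => p.2 < p.1), l p.1 * l p.2 = σ := by
    rw [hσdef]
    apply Finset.sum_nbij' (fun p => (p.2, p.1)) (fun p => (p.2, p.1)) <;>
      simp [mul_comm]
  have key : (∑ i, l i)^2 = (∑ i, l i ^ 2) + 2 * σ := by
    have h1 : (∑ i, l i)^2 = ∑ p ∈ (Finset.univ : Finset (Fin n × Fin n)), l p.1 * l p.2 := by
      rw [sq, Finset.sum_mul_sum]
      rw [← Finset.sum_product']
      rfl
    rw [h1, ← Finset.sum_filter_add_sum_filter_not Finset.univ (fun p : Fin n × Fin n => p.1 < p.2)]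
    rw [← Finset.sum_filter_add_sum_filter_not
      (Finset.univ.filter (fun p : Fin n × Fin n => ¬ p.1 < p.2)) (fun p => p.2 < p.1)]
    have h2 : (Finset.univ.filter (fun p : Fin n × Fin n => ¬ p.1 < p.2)).filter
        (fun p => p.2 < p.1) = Finset.univ.filter (fun p : Fin n × Fin n => p.2 < p.1) := by
      ext p; simp; omega
    have h3 : (Finset.univ.filter (fun p : Fin n × Fin n => ¬ p.1 < p.2)).filter
        (fun p => ¬ p.2 < p.1) = Finset.univ.filter (fun p : Fin n × Fin n => p.1 = p.2) := by
      ext p; simp; omega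
    have h4 : ∑ p ∈ Finset.univ.filter (fun p : Fin n × Fin n => p.1 = p.2),
        l p.1 * l p.2 = ∑ i, l i ^ 2 := by
      rw [Finset.sum_filter, Fintype.sum_prod_type]
      simp [sq]
    rw [h2, h3, h4, hswap]
    ring
  have hsq : l j ^ 2 ≤ (∑ i, l i)^2 := by
    rw [key]
    have : l j ^ 2 ≤ ∑ i, l i ^ 2 :=
      Finset.single_le_sum (f := fun i => l i ^ 2) (fun i _ => sq_nonneg _) (Finset.mem_univ j)
    nlinarith
  have habs : l j ≤ ∑ i, l i := by
    nlinarith [htr, hsq, sq_nonneg (l j + ∑ i, l i)]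
  have := Finset.sum_erase_add Finset.univ l (Finset.mem_univ j)
  linarith
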